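/- Let T be an n×n matrix that is a permutation matrix (permuting the standard basis v₁,…,vₙ). Let T₀ be the (n−1)×(n−1) top-left corner of T (i.e., T₀ = P₀ ∘ T restricted to the span of v₁,…,v_{n−1}, where P₀ is the orthogonal projection). Then there exists an (n−1)×(n−1) permutation matrix A₀ with ‖T₀ − A₀‖_F ≤ 1, where ‖·‖_F is the Frobenius norm. -/

import Mathlib

open Matrix Finset

/-- The Frobenius norm of a complex matrix. -/
noncomputable def frobNorm {m n : Type*} [Fintype m] [Fintype n]
    (M : Matrix m n ℂ) : ℝ :=
  Real.sqrt ((Matrix.trace (Mᴴ * M)).re)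

lemma permMatrix_apply {m : Type*} [DecidableEq m] (σ : Equiv.Perm m) (i j : m) :
    σ.permMatrix ℂ i j = if σ i = j then 1 else 0 := by
  simp [Equiv.Perm.permMatrix, PEquiv.toMatrix, Equiv.toPEquiv, eq_comm]

lemma frobNorm_eq' {m k : Type*} [Fintype m] [Fintype k] (M : Matrix m k ℂ) :
    frobNorm M = Real.sqrt (∑ i, ∑ j, Complex.normSq (M i j)) := by
  unfold frobNorm
  congr 1
  simp only [Matrix.trace, Matrix.mul_apply, Matrix.conjTranspose_apply, Matrix.diag,
    Complex.re_sum]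
  rw [Finset.sum_comm]
  refine Finset.sum_congr rfl fun i _ => Finset.sum_congr rfl fun j _ => ?_
  simp [Complex.normSq_apply, Complex.mul_re]

noncomputable def restrictPerm {n : ℕ} (σ : Equiv.Perm (Fin (n + 1)))
    (h : σ (Fin.last n) = Fin.last n) : Equiv.Perm (Fin n) :=
  Equiv.ofBijective (fun i => (σ i.castSucc).castPred (by
    intro hc
    exact (Fin.castSucc_lt_last i).ne (σ.injective (hc.trans h.symm))))
    (Finite.injective_iff_bijective.mp (by
      intro i j hij
      have := congrArg Fin.castSucc hij
      simp only [Fin.castSucc_castPred] at this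
      exact Fin.castSucc_injective _ (σ.injective this)))

lemma restrictPerm_castSucc {n : ℕ} (σ : Equiv.Perm (Fin (n + 1)))
    (h : σ (Fin.last n) = Fin.last n) (i : Fin n) :
    (restrictPerm σ h i).castSucc = σ i.castSucc := by
  simp [restrictPerm]

lemma restrictPerm_spec {n : ℕ} (σ : Equiv.Perm (Fin (n + 1)))
    (h : σ (Fin.last n) = Fin.last n) (i j : Fin n) :
    restrictPerm σ h i = j ↔ σ i.castSucc = j.castSucc := by
  rw [← restrictPerm_castSucc σ h i]
  exact ⟨fun hr => by rw [hr], fun hr => Fin.castSucc_injective _ hr⟩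

/-- If `T` is an `(n+1)×(n+1)` permutation matrix and `T₀` its top-left `n×n`
corner, then there is an `n×n` permutation matrix `A₀` with `‖T₀ − A₀‖_F ≤ 1`. -/
theorem stmt1 (n : ℕ) (σ : Equiv.Perm (Fin (n + 1))) :
    ∃ π : Equiv.Perm (Fin n),
      frobNorm ((σ.permMatrix ℂ).submatrix Fin.castSucc Fin.castSucc - π.permMatrix ℂ) ≤ 1 := by
  by_cases h : σ (Fin.last n) = Fin.last n
  · refine ⟨restrictPerm σ h, ?_⟩
    have hz : (σ.permMatrix ℂ).submatrix Fin.castSucc Fin.castSucc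
        - (restrictPerm σ h).permMatrix ℂ = 0 := by
      ext i j
      simp only [Matrix.sub_apply, Matrix.submatrix_apply, permMatrix_apply, Matrix.zero_apply]
      by_cases hij : restrictPerm σ h i = j
      · simp [hij, (restrictPerm_spec σ h i j).mp hij]
      · have h5 : ¬ σ i.castSucc = j.castSucc := fun hc => hij ((restrictPerm_spec σ h i j).mpr hc)
        simp [hij, h5]
    rw [hz]
    unfold frobNorm
    simp
  · have hb : σ⁻¹ (Fin.last n) ≠ Fin.last n := by
      intro hc
      exact h (by conv_lhs => rw [← hc, ← Equiv.Perm.mul_apply, mul_inv_cancel, Equiv.Perm.one_apply])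
    set a := σ (Fin.last n) with ha_def
    set b := σ⁻¹ (Fin.last n) with hb_def
    set a' := a.castPred h with ha'
    set b' := b.castPred hb with hb'
    set σ' : Equiv.Perm (Fin (n + 1)) := σ.trans (Equiv.swap a (Fin.last n)) with hσ'
    have hσ'last : σ' (Fin.last n) = Fin.last n := by
      simp [hσ', ← ha_def]
    refine ⟨restrictPerm σ' hσ'last, ?_⟩
    set D := (σ.permMatrix ℂ).submatrix Fin.castSucc Fin.castSucc
        - (restrictPerm σ' hσ'last).permMatrix ℂ with hD
    have hD' : ∀ i j, D i j = if i = b' ∧ j = a' then -1 else 0 := by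
      intro i j
      simp only [hD, Matrix.sub_apply, Matrix.submatrix_apply, permMatrix_apply]
      by_cases hib : i = b'
      · subst hib
        have h1 : σ b'.castSucc = Fin.last n := by
          rw [hb', Fin.castSucc_castPred, hb_def]; simp
        have h2 : restrictPerm σ' hσ'last b' = a' := by
          rw [restrictPerm_spec]
          rw [hσ']
          simp only [Equiv.trans_apply, h1]
          rw [Equiv.swap_apply_right, ha', Fin.castSucc_castPred]
        have h3 : ¬ σ b'.castSucc = j.castSucc := by
          rw [h1]; exact fun hc => (Fin.castSucc_lt_last j).ne hc.symm
        by_cases hja : j = a'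
        · subst hja; simp [h2, h3]
        · have h5 : ¬ restrictPerm σ' hσ'last b' = j := by
            rw [h2]; exact fun hc => hja hc.symm
          simp [h3, h5, hja]
      · have hne : i.castSucc ≠ b := by
          intro hc
          exact hib (Fin.castSucc_injective _ (by rw [hc, hb', Fin.castSucc_castPred]))
        have h1 : σ i.castSucc ≠ Fin.last n := by
          intro hc
          exact hne (by rw [hb_def, ← hc, ← Equiv.Perm.mul_apply, inv_mul_cancel, Equiv.Perm.one_apply])
        have h2 : σ i.castSucc ≠ a := by
          intro hc
          exact (Fin.castSucc_lt_last i).ne (σ.injective (by rw [hc, ha_def]))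
        have h3 : σ' i.castSucc = σ i.castSucc := by
          simp [hσ', Equiv.swap_apply_of_ne_of_ne h2 h1]
        have h4 : restrictPerm σ' hσ'last i = j ↔ σ i.castSucc = j.castSucc := by
          rw [restrictPerm_spec, h3]
        rw [if_neg (fun hc : (i = b' ∧ j = a') => hib hc.1)]
        by_cases hσj : σ i.castSucc = j.castSucc
        · simp [hσj, h4.mpr hσj]
        · have h5 : ¬ restrictPerm σ' hσ'last i = j := fun hc => hσj (h4.mp hc)
          simp [hσj, h5]
    rw [frobNorm_eq']
    have hsum : (∑ i, ∑ j, Complex.normSq (D i j)) = 1 := by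
      have key : ∀ i j : Fin n, Complex.normSq (D i j)
          = if i = b' then (if j = a' then 1 else 0) else 0 := by
        intro i j
        rw [hD' i j]
        by_cases h1 : i = b' <;> by_cases h2 : j = a' <;> simp [h1, h2]
      simp only [key]
      simp [Finset.sum_ite_eq']
    rw [hsum, Real.sqrt_one]
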